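/- Let f and g be complex-valued Schwartz functions on ℝ. Then in L²(ℝ) one has the identity C₊(f·g) + (C₊f)·(C₊g) − C₊(f·C₊g) − C₊(g·C₊f) = 0, and consequently C₊((C₊f)·(C₊g)) = (C₊f)·(C₊g). -/

import Mathlib

open MeasureTheory Complex Filter
open scoped Real ComplexConjugate
open scoped FourierTransform

noncomputable section

/-- The Fourier transform with the convention `f̂ ξ = ∫ e^{-i x ξ} f x dx`. -/
def FT (f : ℝ → ℂ) (ξ : ℝ) : ℂ :=
  ∫ x : ℝ, Complex.exp (-(Complex.I * x * ξ)) * f x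

/-- The Cauchy–Szegő projection `C₊`, given (for functions whose Fourier transform is
integrable, as is the case for all functions appearing in the statement below) by
`(C₊ f)(x) = (1/2π) ∫₀^∞ e^{ixξ} f̂(ξ) dξ`, i.e. `(C₊ f)^ = χ_{[0,∞)} f̂`. -/
def CP (f : ℝ → ℂ) (x : ℝ) : ℂ :=
  ((2 * π : ℝ) : ℂ)⁻¹ * ∫ ξ in Set.Ioi (0 : ℝ), Complex.exp (Complex.I * x * ξ) * FT f ξ

namespace CPaux

/-- the oscillatory kernel `e^{2π i x u}`. -/
def ce (x u : ℝ) : ℂ := Complex.exp ((2 * π * x * u : ℝ) * Complex.I)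

lemma ce_add (x u v : ℝ) : ce x (u + v) = ce x u * ce x v := by
  rw [ce, ce, ce, ← Complex.exp_add]
  congr 1
  push_cast
  ring

lemma norm_ce (x u : ℝ) : ‖ce x u‖ = 1 := by
  rw [ce, Complex.norm_exp]
  simp

lemma ce_zero (x : ℝ) : ce x 0 = 1 := by simp [ce]

lemma ce_neg_neg (x u : ℝ) : ce (-x) (-u) = ce x u := by
  rw [ce, ce]
  congr 2
  push_cast
  ring

lemma ce_comm (x u : ℝ) : ce x u = ce u x := by
  rw [ce, ce]; congr 2; push_cast; ring

lemma continuous_ce {α : Type*} [TopologicalSpace α] {x : ℝ} {h : α → ℝ} (hh : Continuous h) :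
    Continuous fun a => ce x (h a) := by
  apply Complex.continuous_exp.comp
  exact (Complex.continuous_ofReal.comp ((continuous_const.mul hh))).mul continuous_const

lemma hasDerivAt_ce (x u : ℝ) :
    HasDerivAt (fun u => ce x u) (((2 * π * x : ℝ) : ℂ) * Complex.I * ce x u) u := by
  have h1 : HasDerivAt (fun u : ℝ => (2 * π * x * u : ℝ)) (2 * π * x) u := by
    simpa using (hasDerivAt_id u).const_mul (2 * π * x)
  have h2 := ((h1.ofReal_comp).mul_const Complex.I).cexp
  convert h2 using 1
  · unfold ce
    ring
  · rw [ce]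
    ring

/-- indicator of positive reals -/
def ind (t : ℝ) : ℂ := if 0 < t then 1 else 0

lemma measurable_ind : Measurable ind := by
  unfold ind
  exact Measurable.ite (measurableSet_lt measurable_const measurable_id) measurable_const
    measurable_const

lemma norm_ind_le (t : ℝ) : ‖ind t‖ ≤ 1 := by
  rw [ind]; split <;> simp

lemma ind_nonpos {t : ℝ} (ht : ¬ 0 < t) : ind t = 0 := if_neg ht

lemma ind_identity (v w : ℝ) :
    ind (v + w) + ind v * ind w - ind w * ind (v + w) - ind v * ind (v + w) = 0 := by
  by_cases hv : 0 < v <;> by_cases hw : 0 < w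
  · have hvw : 0 < v + w := by linarith
    simp [ind, hv, hw, hvw]
  · simp only [ind, if_pos hv, if_neg hw]; ring
  · simp only [ind, if_neg hv, if_pos hw]; ring
  · have hvw : ¬ 0 < v + w := by push_neg at hv hw ⊢; linarith
    simp [ind, hv, hw, hvw]

lemma ind_continuousAt {t : ℝ} (ht : t ≠ 0) : ContinuousAt ind t := by
  rcases ht.lt_or_gt with h | h
  · have hev : ind =ᶠ[nhds t] fun _ => (0:ℂ) :=
      Filter.eventually_of_mem (isOpen_Iio.mem_nhds h) fun s hs => if_neg (not_lt.2 (le_of_lt hs))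
    have h0 : ind t = 0 := if_neg (not_lt.2 h.le)
    rw [ContinuousAt, h0]
    exact Filter.Tendsto.congr' hev.symm tendsto_const_nhds
  · have hev : ind =ᶠ[nhds t] fun _ => (1:ℂ) :=
      Filter.eventually_of_mem (isOpen_Ioi.mem_nhds h) fun s hs => if_pos hs
    have h0 : ind t = 1 := if_pos h
    rw [ContinuousAt, h0]
    exact Filter.Tendsto.congr' hev.symm tendsto_const_nhds

lemma ind_integral (F : ℝ → ℂ) : ∫ v in Set.Ioi (0:ℝ), F v = ∫ v, ind v * F v := by
  rw [← integral_indicator measurableSet_Ioi]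
  congr 1
  ext v
  by_cases hv : 0 < v
  · simp [Set.indicator_apply, Set.mem_Ioi, hv, ind]
  · simp [Set.indicator_apply, Set.mem_Ioi, hv, ind]

/-- `FT` in terms of mathlib's Fourier integral. -/
lemma FT_eq (F : ℝ → ℂ) (ξ : ℝ) : FT F ξ = 𝓕 F (ξ / (2 * π)) := by
  rw [FT, Real.fourier_real_eq_integral_exp_smul]
  congr 1
  ext x
  rw [smul_eq_mul]
  congr 1
  have h : -2 * π * x * (ξ / (2 * π)) = -(x * ξ) := by
    field_simp
  rw [h]
  push_cast
  ring

lemma FI_eq (h : ℝ → ℂ) (u : ℝ) : 𝓕 h u = ∫ v, ce (-u) v * h v := by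
  rw [Real.fourier_real_eq_integral_exp_smul]
  congr 1
  ext v
  rw [smul_eq_mul]
  congr 2
  push_cast
  ring

lemma FIinv_eq (h : ℝ → ℂ) (x : ℝ) : 𝓕⁻ h x = ∫ v, ce x v * h v := by
  rw [Real.fourierInv_eq_fourier_neg, FI_eq]
  simp only [neg_neg]

/-- `CP` in terms of mathlib's Fourier integral. -/
lemma CP_eq (F : ℝ → ℂ) (x : ℝ) :
    CP F x = ∫ u in Set.Ioi (0:ℝ), ce x u * 𝓕 F u := by
  have h2π : (0:ℝ) < 2 * π := by positivity
  have key := MeasureTheory.integral_comp_mul_left_Ioi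
    (fun ξ : ℝ => Complex.exp (Complex.I * x * ξ) * 𝓕 F (ξ / (2*π))) 0 h2π
  rw [mul_zero] at key
  beta_reduce at key
  have h1 : ∫ ξ in Set.Ioi (0:ℝ), Complex.exp (Complex.I * x * ξ) * FT F ξ
      = ∫ ξ in Set.Ioi (0:ℝ), Complex.exp (Complex.I * x * ξ) * 𝓕 F (ξ / (2*π)) :=
    setIntegral_congr_fun measurableSet_Ioi fun ξ _ => by simp only [FT_eq]
  have h3 : ∫ u in Set.Ioi (0:ℝ), ce x u * 𝓕 F u
      = ∫ u in Set.Ioi (0:ℝ), Complex.exp (Complex.I * x * ((2*π*u : ℝ) : ℂ)) * 𝓕 F ((2*π*u) / (2*π)) :=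
    setIntegral_congr_fun measurableSet_Ioi fun u _ => by
      have e1 : ce x u = Complex.exp (Complex.I * x * ((2*π*u : ℝ) : ℂ)) := by
        rw [ce]; congr 1; push_cast; ring
      have e2 : (2*π*u) / (2*π) = u := by
        have : (2:ℝ)*π ≠ 0 := by positivity
        field_simp
      rw [e1, e2]
  rw [CP, h1, h3, key, Complex.real_smul, Complex.ofReal_inv]


/- ===== Part 2: generic Fubini helpers ===== -/

lemma ce_mul_ce (a b y : ℝ) : ce a y * ce b y = ce (a + b) y := by
  rw [ce, ce, ce, ← Complex.exp_add]
  congr 1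
  push_cast
  ring

lemma measurable_ce_comp {α : Type*} [MeasurableSpace α] (x : ℝ) {h : α → ℝ}
    (hh : Measurable h) : Measurable fun a => ce x (h a) := by
  apply Complex.continuous_exp.measurable.comp
  exact (Complex.measurable_ofReal.comp (hh.const_mul (2 * π * x))).mul measurable_const

lemma continuous_ce2 : Continuous fun p : ℝ × ℝ => ce p.1 p.2 := by
  apply Complex.continuous_exp.comp
  exact (Complex.continuous_ofReal.comp
    ((continuous_const.mul continuous_fst).mul continuous_snd)).mul continuous_const

lemma my_dom {X : ℝ × ℝ → ℂ} {Y : ℝ × ℝ → ℂ} (hX : Integrable X)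
    (hY : AEStronglyMeasurable Y volume) (hb : ∀ p, ‖Y p‖ ≤ ‖X p‖) : Integrable Y :=
  hX.norm.mono' hY (Filter.Eventually.of_forall hb)

lemma my_swap {F : ℝ → ℝ → ℂ} (h : Integrable (fun p : ℝ × ℝ => F p.1 p.2)) :
    ∫ u, ∫ v, F u v = ∫ v, ∫ u, F u v := by
  apply MeasureTheory.integral_integral_swap
  rwa [← MeasureTheory.Measure.volume_eq_prod] 

lemma my_prod {F : ℝ → ℝ → ℂ} (h : Integrable (fun p : ℝ × ℝ => F p.1 p.2)) :
    ∫ u, ∫ v, F u v = ∫ p : ℝ × ℝ, F p.1 p.2 := by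
  rw [MeasureTheory.integral_integral (f := F) (by rwa [← MeasureTheory.Measure.volume_eq_prod]),
    ← MeasureTheory.Measure.volume_eq_prod]

lemma my_flip (G : ℝ × ℝ → ℂ) : ∫ q : ℝ × ℝ, G q.swap = ∫ p : ℝ × ℝ, G p := by
  rw [MeasureTheory.Measure.volume_eq_prod]
  exact MeasureTheory.integral_prod_swap G

/- base integrable functions -/

lemma base1 (φ ψ : SchwartzMap ℝ ℂ) : Integrable (fun p : ℝ × ℝ => φ p.1 * ψ p.2) := by
  rw [MeasureTheory.Measure.volume_eq_prod]
  exact φ.integrable.mul_prod ψ.integrable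

lemma base2 (φ ψ : SchwartzMap ℝ ℂ) :
    Integrable (fun p : ℝ × ℝ => φ p.2 * ψ (p.1 - p.2)) := by
  rw [MeasureTheory.Measure.volume_eq_prod]
  exact MeasureTheory.Integrable.convolution_integrand (ContinuousLinearMap.mul ℝ ℂ)
    φ.integrable ψ.integrable

lemma norm_helper (x : ℝ) (a : ℂ) (ha : ‖a‖ ≤ 1) (s : ℝ) (z : ℂ) : ‖a * (ce x s * z)‖ ≤ ‖z‖ := by
  rw [norm_mul, norm_mul, norm_ce, one_mul]
  exact mul_le_of_le_one_left (norm_nonneg z) ha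

lemma norm_ind_mul_ind (a b : ℝ) : ‖ind a * ind b‖ ≤ 1 := by
  rw [norm_mul]
  exact mul_le_one₀ (norm_ind_le a) (norm_nonneg _) (norm_ind_le b)

lemma bound1 (a : ℝ) (z w : ℂ) : ‖z‖ * (‖ind a‖ * ‖w‖) ≤ ‖z‖ * ‖w‖ := by
  calc ‖z‖ * (‖ind a‖ * ‖w‖) = ‖ind a‖ * (‖z‖ * ‖w‖) := by ring
  _ ≤ 1 * (‖z‖ * ‖w‖) := mul_le_mul_of_nonneg_right (norm_ind_le a) (by positivity)
  _ = ‖z‖ * ‖w‖ := one_mul _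

lemma bound2 (a b : ℝ) (z w : ℂ) : ‖ind a‖ * (‖ind b‖ * ‖z‖ * ‖w‖) ≤ ‖z‖ * ‖w‖ := by
  calc ‖ind a‖ * (‖ind b‖ * ‖z‖ * ‖w‖) ≤ 1 * (‖ind b‖ * ‖z‖ * ‖w‖) :=
        mul_le_mul_of_nonneg_right (norm_ind_le a) (by positivity)
  _ = ‖ind b‖ * (‖z‖ * ‖w‖) := by ring
  _ ≤ 1 * (‖z‖ * ‖w‖) := mul_le_mul_of_nonneg_right (norm_ind_le b) (by positivity)
  _ = ‖z‖ * ‖w‖ := one_mul _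
section Main

variable {f g φ ψ : SchwartzMap ℝ ℂ}

lemma INV (hφ : ⇑φ = 𝓕 ⇑f) : ∀ y, f y = ∫ v, ce y v * φ v := by
  intro y
  have hinv : 𝓕⁻ (𝓕 ⇑f) = ⇑f :=
    f.continuous.fourierInv_fourier_eq f.integrable (by rw [← hφ]; exact φ.integrable)
  conv_lhs => rw [← hinv]
  rw [FIinv_eq]
  simp_rw [← hφ]

lemma CPf_eq (hφ : ⇑φ = 𝓕 ⇑f) : ∀ y, CP ⇑f y = ∫ v, ind v * (ce y v * φ v) := by
  intro y
  rw [CP_eq, ind_integral (fun u => ce y u * 𝓕 (⇑f) u)]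
  simp_rw [← hφ]

lemma conv_fg (hφ : ⇑φ = 𝓕 ⇑f) (hψ : ⇑ψ = 𝓕 ⇑g) (u : ℝ) :
    𝓕 (fun y => f y * g y) u = ∫ v, φ v * ψ (u - v) := by
  rw [FI_eq]
  simp_rw [INV hφ, ← MeasureTheory.integral_mul_const, ← MeasureTheory.integral_const_mul]
  rw [my_swap (F := fun y a => ce (-u) y * (ce y a * φ a * g y)) (by
    refine my_dom (base1 g φ) ?_ ?_
    · refine Measurable.aestronglyMeasurable ?_
      exact (measurable_ce_comp (-u) measurable_fst).mul
        ((continuous_ce2.measurable.mul (φ.continuous.measurable.comp measurable_snd)).mul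
          (g.continuous.measurable.comp measurable_fst))
    · intro p
      simp only [norm_mul, norm_ce, one_mul]
      exact le_of_eq (by ring))]
  have key : ∀ a y, ce (-u) y * (ce y a * φ a * g y) = φ a * (ce (a + -u) y * g y) := by
    intro a y
    rw [ce_comm y a, show ce (a + -u) y = ce a y * ce (-u) y from (ce_mul_ce a (-u) y).symm]
    ring
  simp_rw [key, MeasureTheory.integral_const_mul]
  have last : ∀ a : ℝ, (∫ y, ce (a + -u) y * g y) = ψ (u - a) := by
    intro a
    rw [show a + -u = -(u - a) by ring, ← FI_eq, ← hψ]
  simp_rw [last]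

lemma term1_eq (hφ : ⇑φ = 𝓕 ⇑f) (hψ : ⇑ψ = 𝓕 ⇑g) (x : ℝ) :
    CP (fun y => f y * g y) x
      = ∫ p : ℝ × ℝ, ind (p.1 + p.2) * (ce x (p.1 + p.2) * (φ p.1 * ψ p.2)) := by
  rw [CP_eq, ind_integral (fun u => ce x u * 𝓕 (fun y => f y * g y) u)]
  simp_rw [conv_fg hφ hψ, ← MeasureTheory.integral_const_mul]
  rw [my_swap (F := fun u v => ind u * (ce x u * (φ v * ψ (u - v)))) (by
    refine my_dom (base2 φ ψ) ?_ ?_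
    · refine Measurable.aestronglyMeasurable ?_
      exact (measurable_ind.comp measurable_fst).mul
        ((measurable_ce_comp x measurable_fst).mul
          ((φ.continuous.measurable.comp measurable_snd).mul
            (ψ.continuous.measurable.comp (measurable_fst.sub measurable_snd))))
    · intro p
      exact norm_helper x _ (norm_ind_le _) _ _)]
  have trans : ∀ v, (∫ u, ind u * (ce x u * (φ v * ψ (u - v))))
      = ∫ w, ind (v + w) * (ce x (v + w) * (φ v * ψ w)) := by
    intro v
    rw [← MeasureTheory.integral_add_right_eq_self
      (fun u => ind u * (ce x u * (φ v * ψ (u - v)))) v]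
    refine MeasureTheory.integral_congr_ae (Filter.Eventually.of_forall fun w => ?_)
    simp only []
    rw [add_sub_cancel_right, add_comm w v]
  simp_rw [trans]
  rw [my_prod (F := fun v w => ind (v + w) * (ce x (v + w) * (φ v * ψ w))) (by
    refine my_dom (base1 φ ψ) ?_ ?_
    · refine Measurable.aestronglyMeasurable ?_
      exact (measurable_ind.comp (measurable_fst.add measurable_snd)).mul
        ((measurable_ce_comp x (measurable_fst.add measurable_snd)).mul
          ((φ.continuous.measurable.comp measurable_fst).mul
            (ψ.continuous.measurable.comp measurable_snd)))
    · intro p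
      exact norm_helper x _ (norm_ind_le _) _ _)]

lemma term2_eq (hφ : ⇑φ = 𝓕 ⇑f) (hψ : ⇑ψ = 𝓕 ⇑g) (x : ℝ) :
    CP ⇑f x * CP ⇑g x
      = ∫ p : ℝ × ℝ, (ind p.1 * ind p.2) * (ce x (p.1 + p.2) * (φ p.1 * ψ p.2)) := by
  rw [CPf_eq hφ x, CPf_eq hψ x, ← MeasureTheory.integral_mul_const]
  simp_rw [← MeasureTheory.integral_const_mul]
  have key : ∀ v w, (ind v * (ce x v * φ v)) * (ind w * (ce x w * ψ w))
      = (ind v * ind w) * (ce x (v + w) * (φ v * ψ w)) := by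
    intro v w
    rw [ce_add]
    ring
  simp_rw [key]
  rw [my_prod (F := fun v w => (ind v * ind w) * (ce x (v + w) * (φ v * ψ w))) (by
    refine my_dom (base1 φ ψ) ?_ ?_
    · refine Measurable.aestronglyMeasurable ?_
      exact ((measurable_ind.comp measurable_fst).mul (measurable_ind.comp measurable_snd)).mul
        ((measurable_ce_comp x (measurable_fst.add measurable_snd)).mul
          ((φ.continuous.measurable.comp measurable_fst).mul
            (ψ.continuous.measurable.comp measurable_snd)))
    · intro p
      exact norm_helper x _ (norm_ind_mul_ind _ _) _ _)]

lemma conv_fCPg (hφ : ⇑φ = 𝓕 ⇑f) (hψ : ⇑ψ = 𝓕 ⇑g) (u : ℝ) :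
    𝓕 (fun y => f y * CP ⇑g y) u = ∫ v, (ind v * ψ v) * φ (u - v) := by
  rw [FI_eq]
  simp_rw [CPf_eq hψ, ← MeasureTheory.integral_const_mul]
  rw [my_swap (F := fun y v => ce (-u) y * (f y * (ind v * (ce y v * ψ v)))) (by
    refine my_dom (base1 f ψ) ?_ ?_
    · refine Measurable.aestronglyMeasurable ?_
      exact (measurable_ce_comp (-u) measurable_fst).mul
        ((f.continuous.measurable.comp measurable_fst).mul
          ((measurable_ind.comp measurable_snd).mul
            (continuous_ce2.measurable.mul (ψ.continuous.measurable.comp measurable_snd))))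
    · intro p
      simp only [norm_mul, norm_ce, one_mul]
      exact bound1 _ _ _)]
  have key : ∀ v y, ce (-u) y * (f y * (ind v * (ce y v * ψ v)))
      = (ind v * ψ v) * (ce (v + -u) y * f y) := by
    intro v y
    rw [ce_comm y v, show ce (v + -u) y = ce v y * ce (-u) y from (ce_mul_ce v (-u) y).symm]
    ring
  simp_rw [key, MeasureTheory.integral_const_mul]
  have last : ∀ v : ℝ, (∫ y, ce (v + -u) y * f y) = φ (u - v) := by
    intro v
    rw [show v + -u = -(u - v) by ring, ← FI_eq, ← hφ]
  simp_rw [last]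

lemma term3_eq (hφ : ⇑φ = 𝓕 ⇑f) (hψ : ⇑ψ = 𝓕 ⇑g) (x : ℝ) :
    CP (fun y => f y * CP ⇑g y) x
      = ∫ p : ℝ × ℝ, (ind p.2 * ind (p.1 + p.2)) * (ce x (p.1 + p.2) * (φ p.1 * ψ p.2)) := by
  rw [CP_eq, ind_integral (fun u => ce x u * 𝓕 (fun y => f y * CP ⇑g y) u)]
  simp_rw [conv_fCPg hφ hψ, ← MeasureTheory.integral_const_mul]
  rw [my_swap (F := fun u v => ind u * (ce x u * ((ind v * ψ v) * φ (u - v)))) (by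
    refine my_dom (base2 ψ φ) ?_ ?_
    · refine Measurable.aestronglyMeasurable ?_
      exact (measurable_ind.comp measurable_fst).mul
        ((measurable_ce_comp x measurable_fst).mul
          (((measurable_ind.comp measurable_snd).mul
            (ψ.continuous.measurable.comp measurable_snd)).mul
            (φ.continuous.measurable.comp (measurable_fst.sub measurable_snd))))
    · intro p
      simp only [norm_mul, norm_ce, one_mul]
      exact bound2 _ _ _ _)]
  have trans : ∀ v, (∫ u, ind u * (ce x u * ((ind v * ψ v) * φ (u - v))))
      = ∫ w, ind (v + w) * (ce x (v + w) * ((ind v * ψ v) * φ w)) := by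
    intro v
    rw [← MeasureTheory.integral_add_right_eq_self
      (fun u => ind u * (ce x u * ((ind v * ψ v) * φ (u - v)))) v]
    refine MeasureTheory.integral_congr_ae (Filter.Eventually.of_forall fun w => ?_)
    simp only []
    rw [add_sub_cancel_right, add_comm w v]
  simp_rw [trans]
  rw [my_prod (F := fun v w => ind (v + w) * (ce x (v + w) * ((ind v * ψ v) * φ w))) (by
    refine my_dom (base1 ψ φ) ?_ ?_
    · refine Measurable.aestronglyMeasurable ?_
      exact (measurable_ind.comp (measurable_fst.add measurable_snd)).mul
        ((measurable_ce_comp x (measurable_fst.add measurable_snd)).mul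
          (((measurable_ind.comp measurable_fst).mul
            (ψ.continuous.measurable.comp measurable_fst)).mul
            (φ.continuous.measurable.comp measurable_snd)))
    · intro p
      simp only [norm_mul, norm_ce, one_mul]
      exact bound2 _ _ _ _)]
  rw [← my_flip (fun p : ℝ × ℝ =>
    (ind p.2 * ind (p.1 + p.2)) * (ce x (p.1 + p.2) * (φ p.1 * ψ p.2)))]
  refine MeasureTheory.integral_congr_ae (Filter.Eventually.of_forall fun q => ?_)
  simp only [Prod.fst_swap, Prod.snd_swap]
  rw [add_comm q.2 q.1]
  ring

lemma term4_eq (hφ : ⇑φ = 𝓕 ⇑f) (hψ : ⇑ψ = 𝓕 ⇑g) (x : ℝ) :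
    CP (fun y => g y * CP ⇑f y) x
      = ∫ p : ℝ × ℝ, (ind p.1 * ind (p.1 + p.2)) * (ce x (p.1 + p.2) * (φ p.1 * ψ p.2)) := by
  rw [CP_eq, ind_integral (fun u => ce x u * 𝓕 (fun y => g y * CP ⇑f y) u)]
  simp_rw [conv_fCPg hψ hφ, ← MeasureTheory.integral_const_mul]
  rw [my_swap (F := fun u v => ind u * (ce x u * ((ind v * φ v) * ψ (u - v)))) (by
    refine my_dom (base2 φ ψ) ?_ ?_
    · refine Measurable.aestronglyMeasurable ?_
      exact (measurable_ind.comp measurable_fst).mul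
        ((measurable_ce_comp x measurable_fst).mul
          (((measurable_ind.comp measurable_snd).mul
            (φ.continuous.measurable.comp measurable_snd)).mul
            (ψ.continuous.measurable.comp (measurable_fst.sub measurable_snd))))
    · intro p
      simp only [norm_mul, norm_ce, one_mul]
      exact bound2 _ _ _ _)]
  have trans : ∀ v, (∫ u, ind u * (ce x u * ((ind v * φ v) * ψ (u - v))))
      = ∫ w, ind (v + w) * (ce x (v + w) * ((ind v * φ v) * ψ w)) := by
    intro v
    rw [← MeasureTheory.integral_add_right_eq_self
      (fun u => ind u * (ce x u * ((ind v * φ v) * ψ (u - v)))) v]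
    refine MeasureTheory.integral_congr_ae (Filter.Eventually.of_forall fun w => ?_)
    simp only []
    rw [add_sub_cancel_right, add_comm w v]
  simp_rw [trans]
  rw [my_prod (F := fun v w => ind (v + w) * (ce x (v + w) * ((ind v * φ v) * ψ w))) (by
    refine my_dom (base1 φ ψ) ?_ ?_
    · refine Measurable.aestronglyMeasurable ?_
      exact (measurable_ind.comp (measurable_fst.add measurable_snd)).mul
        ((measurable_ce_comp x (measurable_fst.add measurable_snd)).mul
          (((measurable_ind.comp measurable_fst).mul
            (φ.continuous.measurable.comp measurable_fst)).mul
            (ψ.continuous.measurable.comp measurable_snd)))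
    · intro p
      simp only [norm_mul, norm_ce, one_mul]
      exact bound2 _ _ _ _)]
  refine MeasureTheory.integral_congr_ae (Filter.Eventually.of_forall fun p => ?_)
  ring

lemma claim1 (hφ : ⇑φ = 𝓕 ⇑f) (hψ : ⇑ψ = 𝓕 ⇑g) (x : ℝ) :
    CP (fun y => f y * g y) x + CP ⇑f x * CP ⇑g x - CP (fun y => f y * CP ⇑g y) x
      - CP (fun y => g y * CP ⇑f y) x = 0 := by
  have hm0 : Measurable fun p : ℝ × ℝ => ce x (p.1 + p.2) * (φ p.1 * ψ p.2) :=
    (measurable_ce_comp x (measurable_fst.add measurable_snd)).mul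
      ((φ.continuous.measurable.comp measurable_fst).mul
        (ψ.continuous.measurable.comp measurable_snd))
  have hI1 : Integrable (fun p : ℝ × ℝ =>
      ind (p.1 + p.2) * (ce x (p.1 + p.2) * (φ p.1 * ψ p.2))) :=
    my_dom (base1 φ ψ)
      (((measurable_ind.comp (measurable_fst.add measurable_snd)).mul hm0).aestronglyMeasurable)
      (fun p => norm_helper x _ (norm_ind_le _) _ _)
  have hI2 : Integrable (fun p : ℝ × ℝ =>
      (ind p.1 * ind p.2) * (ce x (p.1 + p.2) * (φ p.1 * ψ p.2))) :=
    my_dom (base1 φ ψ)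
      ((((measurable_ind.comp measurable_fst).mul (measurable_ind.comp measurable_snd)).mul
        hm0).aestronglyMeasurable)
      (fun p => norm_helper x _ (norm_ind_mul_ind _ _) _ _)
  have hI3 : Integrable (fun p : ℝ × ℝ =>
      (ind p.2 * ind (p.1 + p.2)) * (ce x (p.1 + p.2) * (φ p.1 * ψ p.2))) :=
    my_dom (base1 φ ψ)
      ((((measurable_ind.comp measurable_snd).mul
        (measurable_ind.comp (measurable_fst.add measurable_snd))).mul hm0).aestronglyMeasurable)
      (fun p => norm_helper x _ (norm_ind_mul_ind _ _) _ _)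
  have hI4 : Integrable (fun p : ℝ × ℝ =>
      (ind p.1 * ind (p.1 + p.2)) * (ce x (p.1 + p.2) * (φ p.1 * ψ p.2))) :=
    my_dom (base1 φ ψ)
      ((((measurable_ind.comp measurable_fst).mul
        (measurable_ind.comp (measurable_fst.add measurable_snd))).mul hm0).aestronglyMeasurable)
      (fun p => norm_helper x _ (norm_ind_mul_ind _ _) _ _)
  have h12 : Integrable (fun p : ℝ × ℝ =>
      ind (p.1 + p.2) * (ce x (p.1 + p.2) * (φ p.1 * ψ p.2))
      + (ind p.1 * ind p.2) * (ce x (p.1 + p.2) * (φ p.1 * ψ p.2))) := hI1.add hI2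
  have h123 : Integrable (fun p : ℝ × ℝ =>
      (ind (p.1 + p.2) * (ce x (p.1 + p.2) * (φ p.1 * ψ p.2))
      + (ind p.1 * ind p.2) * (ce x (p.1 + p.2) * (φ p.1 * ψ p.2)))
      - (ind p.2 * ind (p.1 + p.2)) * (ce x (p.1 + p.2) * (φ p.1 * ψ p.2))) := h12.sub hI3
  rw [term1_eq hφ hψ x, term2_eq hφ hψ x, term3_eq hφ hψ x, term4_eq hφ hψ x,
    ← MeasureTheory.integral_add hI1 hI2, ← MeasureTheory.integral_sub h12 hI3,
    ← MeasureTheory.integral_sub h123 hI4]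
  have hzero : ∀ p : ℝ × ℝ,
      ind (p.1 + p.2) * (ce x (p.1 + p.2) * (φ p.1 * ψ p.2))
      + (ind p.1 * ind p.2) * (ce x (p.1 + p.2) * (φ p.1 * ψ p.2))
      - (ind p.2 * ind (p.1 + p.2)) * (ce x (p.1 + p.2) * (φ p.1 * ψ p.2))
      - (ind p.1 * ind (p.1 + p.2)) * (ce x (p.1 + p.2) * (φ p.1 * ψ p.2)) = 0 := by
    intro p
    linear_combination (ind_identity p.1 p.2) * (ce x (p.1 + p.2) * (φ p.1 * ψ p.2))
  rw [MeasureTheory.integral_congr_ae (Filter.Eventually.of_forall hzero),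
    MeasureTheory.integral_zero]

end Main
/- ===== Part 4: claim 2 ===== -/

section Claim2

variable {f g φ ψ : SchwartzMap ℝ ℂ}

lemma my_dom1 {X Y : ℝ → ℂ} (hX : Integrable X) (hY : AEStronglyMeasurable Y volume)
    (hb : ∀ t, ‖Y t‖ ≤ ‖X t‖) : Integrable Y :=
  hX.norm.mono' hY (Filter.Eventually.of_forall hb)

lemma ind_mul_eq_indicator (x : ℝ) (A : ℝ → ℂ) (u : ℝ) :
    ce x u * ((Set.Ioi (0:ℝ)).indicator A u) = ind u * (ce x u * A u) := by
  by_cases h : 0 < u <;>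
    simp [Set.indicator_apply, Set.mem_Ioi, h, ind]

lemma cp_cont (hφ : ⇑φ = 𝓕 ⇑f) : Continuous (CP ⇑f) := by
  have hi : Integrable ((Set.Ioi (0:ℝ)).indicator (𝓕 ⇑f)) := by
    rw [← hφ]
    exact φ.integrable.indicator measurableSet_Ioi
  have heq : CP ⇑f = 𝓕 fun x => (Set.Ioi (0:ℝ)).indicator (𝓕 ⇑f) (-x) := by
    rw [← Real.fourierInv_eq_fourier_comp_neg]
    funext y
    rw [FIinv_eq, CPf_eq hφ y]
    refine MeasureTheory.integral_congr_ae (Filter.Eventually.of_forall fun u => ?_)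
    show ind u * (ce y u * φ u) = ce y u * (Set.Ioi (0:ℝ)).indicator (𝓕 ⇑f) u
    rw [ind_mul_eq_indicator y (𝓕 ⇑f) u, ← hφ]
  rw [heq]
  exact VectorFourier.fourierIntegral_continuous Real.continuous_fourierChar
    (by exact continuous_inner) hi.comp_neg

lemma cp_bound_global (hφ : ⇑φ = 𝓕 ⇑f) (x : ℝ) : ‖CP ⇑f x‖ ≤ ∫ v, ‖φ v‖ := by
  rw [CPf_eq hφ x]
  refine le_trans (MeasureTheory.norm_integral_le_integral_norm _) ?_
  have hint : Integrable (fun v => ind v * (ce x v * φ v)) :=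
    my_dom1 φ.integrable
      ((measurable_ind.mul ((measurable_ce_comp x measurable_id).mul
        φ.continuous.measurable)).aestronglyMeasurable)
      (fun t => norm_helper x _ (norm_ind_le _) _ _)
  refine MeasureTheory.integral_mono hint.norm φ.integrable.norm fun v => ?_
  exact norm_helper x _ (norm_ind_le _) _ _

lemma schwartz_norm_tendsto_zero (φ : SchwartzMap ℝ ℂ) :
    Filter.Tendsto (fun u => ‖φ u‖) Filter.atTop (nhds 0) := by
  obtain ⟨C, hC0, hC⟩ := φ.decay 1 0
  have hb : ∀ᶠ u in Filter.atTop, ‖φ u‖ ≤ C / u := by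
    filter_upwards [Filter.eventually_ge_atTop (1:ℝ)] with u hu
    have h := hC u
    rw [norm_iteratedFDeriv_zero, pow_one, Real.norm_eq_abs, abs_of_pos (by linarith)] at h
    rw [le_div_iff₀ (by linarith : (0:ℝ) < u)]
    linarith [h]
  have hnn : ∀ᶠ u in Filter.atTop, 0 ≤ ‖φ u‖ :=
    Filter.Eventually.of_forall fun u => norm_nonneg _
  exact squeeze_zero' hnn hb (Filter.Tendsto.div_atTop tendsto_const_nhds Filter.tendsto_id)

lemma integrable_ce_schwartz (x : ℝ) (φ : SchwartzMap ℝ ℂ) :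
    Integrable fun u => ce x u * φ u :=
  my_dom1 φ.integrable
    (((measurable_ce_comp x measurable_id).mul φ.continuous.measurable).aestronglyMeasurable)
    (fun t => by rw [norm_mul, norm_ce, one_mul])

lemma cp_ibp (hφ : ⇑φ = 𝓕 ⇑f) (x : ℝ) :
    ((2 * π * x : ℝ) : ℂ) * Complex.I * CP ⇑f x
      = -(φ 0) - ∫ u in Set.Ioi (0:ℝ), ce x u * (SchwartzMap.derivCLM ℝ ℂ φ) u := by
  have hder : ∀ u ∈ Set.Ioi (0:ℝ), HasDerivAt (fun u => ce x u * φ u)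
      ((((2 * π * x : ℝ) : ℂ) * Complex.I) * (ce x u * φ u)
        + ce x u * (SchwartzMap.derivCLM ℝ ℂ φ) u) u := by
    intro u _
    have h1 := (hasDerivAt_ce x u).mul (φ.differentiable.differentiableAt.hasDerivAt)
    have h2 : ((2 * π * x : ℝ) : ℂ) * Complex.I * ce x u * φ u + ce x u * deriv (⇑φ) u
        = (((2 * π * x : ℝ) : ℂ) * Complex.I) * (ce x u * φ u)
          + ce x u * (SchwartzMap.derivCLM ℝ ℂ φ) u := by
      rw [SchwartzMap.derivCLM_apply]
      ring
    exact h2 ▸ h1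
  have hcont : ContinuousWithinAt (fun u => ce x u * φ u) (Set.Ici 0) 0 :=
    ((continuous_ce continuous_id).mul φ.continuous).continuousWithinAt
  have int1 : Integrable (fun u => (((2 * π * x : ℝ) : ℂ) * Complex.I) * (ce x u * φ u)) :=
    (integrable_ce_schwartz x φ).const_mul _
  have int2 : Integrable (fun u => ce x u * (SchwartzMap.derivCLM ℝ ℂ φ) u) :=
    integrable_ce_schwartz x (SchwartzMap.derivCLM ℝ ℂ φ)
  have hint : MeasureTheory.IntegrableOn (fun u =>
      (((2 * π * x : ℝ) : ℂ) * Complex.I) * (ce x u * φ u)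
        + ce x u * (SchwartzMap.derivCLM ℝ ℂ φ) u) (Set.Ioi 0) :=
    (int1.add int2).integrableOn
  have htend : Filter.Tendsto (fun u => ce x u * φ u) Filter.atTop (nhds 0) := by
    refine squeeze_zero_norm' ?_ (schwartz_norm_tendsto_zero φ)
    exact Filter.Eventually.of_forall fun u => by rw [norm_mul, norm_ce, one_mul]
  have key := MeasureTheory.integral_Ioi_of_hasDerivAt_of_tendsto hcont hder hint htend
  rw [MeasureTheory.integral_add int1.integrableOn int2.integrableOn,
    MeasureTheory.integral_const_mul, ce_zero, one_mul, zero_sub] at key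
  have hcp : CP ⇑f x = ∫ u in Set.Ioi (0:ℝ), ce x u * φ u := by
    rw [CP_eq]
    exact MeasureTheory.setIntegral_congr_fun measurableSet_Ioi fun u _ => by rw [← hφ]
  rw [hcp]
  linear_combination key

lemma cp_bound_decay (hφ : ⇑φ = 𝓕 ⇑f) (x : ℝ) :
    |x| * ‖CP ⇑f x‖ ≤ (‖φ 0‖ + ∫ v, ‖(SchwartzMap.derivCLM ℝ ℂ φ) v‖) / (2 * π) := by
  have hkey := cp_ibp hφ x
  have hnorm : ‖(((2 * π * x : ℝ)) : ℂ) * Complex.I * CP ⇑f x‖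
      = (2 * π) * (|x| * ‖CP ⇑f x‖) := by
    rw [norm_mul, norm_mul, Complex.norm_I, mul_one, Complex.norm_real, Real.norm_eq_abs,
      abs_mul, abs_of_pos Real.two_pi_pos]
    ring
  have hub : ‖-(φ 0) - ∫ u in Set.Ioi (0:ℝ), ce x u * (SchwartzMap.derivCLM ℝ ℂ φ) u‖
      ≤ ‖φ 0‖ + ∫ v, ‖(SchwartzMap.derivCLM ℝ ℂ φ) v‖ := by
    refine le_trans (norm_sub_le _ _) ?_
    rw [norm_neg]
    gcongr
    refine le_trans (MeasureTheory.norm_integral_le_integral_norm _) ?_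
    rw [MeasureTheory.setIntegral_congr_fun measurableSet_Ioi
      (f := fun u => ‖ce x u * (SchwartzMap.derivCLM ℝ ℂ φ) u‖)
      (g := fun u => ‖(SchwartzMap.derivCLM ℝ ℂ φ) u‖)
      (fun u _ => by simp only [norm_mul, norm_ce, one_mul])]
    exact MeasureTheory.setIntegral_le_integral (SchwartzMap.derivCLM ℝ ℂ φ).integrable.norm
      (Filter.Eventually.of_forall fun v => norm_nonneg _)
  rw [le_div_iff₀ Real.two_pi_pos]
  calc |x| * ‖CP ⇑f x‖ * (2 * π) = (2 * π) * (|x| * ‖CP ⇑f x‖) := by ring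
  _ = ‖(((2 * π * x : ℝ)) : ℂ) * Complex.I * CP ⇑f x‖ := hnorm.symm
  _ = ‖-(φ 0) - ∫ u in Set.Ioi (0:ℝ), ce x u * (SchwartzMap.derivCLM ℝ ℂ φ) u‖ := by rw [hkey]
  _ ≤ _ := hub

lemma h_int (hφ : ⇑φ = 𝓕 ⇑f) (hψ : ⇑ψ = 𝓕 ⇑g) :
    Integrable (fun x => CP ⇑f x * CP ⇑g x) := by
  set Af := (‖φ 0‖ + ∫ v, ‖(SchwartzMap.derivCLM ℝ ℂ φ) v‖) / (2 * π) with hAfd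
  set Ag := (‖ψ 0‖ + ∫ v, ‖(SchwartzMap.derivCLM ℝ ℂ ψ) v‖) / (2 * π) with hAgd
  set Bf := ∫ v, ‖φ v‖ with hBfd
  set Bg := ∫ v, ‖ψ v‖ with hBgd
  have hAf0 : 0 ≤ Af := div_nonneg
    (add_nonneg (norm_nonneg _) (MeasureTheory.integral_nonneg fun v => norm_nonneg _))
    (by positivity)
  have hAg0 : 0 ≤ Ag := div_nonneg
    (add_nonneg (norm_nonneg _) (MeasureTheory.integral_nonneg fun v => norm_nonneg _))
    (by positivity)
  have hBg0 : 0 ≤ Bg := MeasureTheory.integral_nonneg fun v => norm_nonneg _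
  refine MeasureTheory.Integrable.mono'
    ((integrable_inv_one_add_sq).const_mul (Bf * Bg + Af * Ag))
    (((cp_cont hφ).mul (cp_cont hψ)).aestronglyMeasurable)
    (Filter.Eventually.of_forall fun x => ?_)
  have h1 := cp_bound_global hφ x
  have h2 := cp_bound_global hψ x
  have h3 := cp_bound_decay hφ x
  have h4 := cp_bound_decay hψ x
  rw [norm_mul]
  have hpos : (0:ℝ) < 1 + x^2 := by positivity
  rw [show (Bf * Bg + Af * Ag) * (1 + x^2)⁻¹ = (Bf * Bg + Af * Ag) / (1 + x^2) by ring,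
    le_div_iff₀ hpos]
  have expand : ‖CP ⇑f x‖ * ‖CP ⇑g x‖ * (1 + x^2)
      = ‖CP ⇑f x‖ * ‖CP ⇑g x‖ + (|x| * ‖CP ⇑f x‖) * (|x| * ‖CP ⇑g x‖) := by
    rw [← _root_.sq_abs x]
    ring
  have k1 : (|x| * ‖CP ⇑f x‖) * (|x| * ‖CP ⇑g x‖) ≤ Af * Ag :=
    mul_le_mul h3 h4 (mul_nonneg (abs_nonneg x) (norm_nonneg _)) hAf0
  have k2 : ‖CP ⇑f x‖ * ‖CP ⇑g x‖ ≤ Bf * Bg :=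
    mul_le_mul h1 h2 (norm_nonneg _) (le_trans (norm_nonneg _) h1)
  linarith [k1, k2, expand]

end Claim2
/- ===== Part 5: Hconv and conclusion ===== -/

def Hconv (φ ψ : SchwartzMap ℝ ℂ) (u : ℝ) : ℂ :=
  ∫ v, (ind v * φ v) * (ind (u - v) * ψ (u - v))

section Claim2b

variable {f g φ ψ : SchwartzMap ℝ ℂ}

lemma base2s (φ ψ : SchwartzMap ℝ ℂ) :
    Integrable (fun p : ℝ × ℝ => φ p.1 * ψ (p.2 - p.1)) := by
  have h := base2 φ ψ
  rw [MeasureTheory.Measure.volume_eq_prod] at h ⊢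
  exact h.swap

lemma hconv_big_integrable (φ ψ : SchwartzMap ℝ ℂ) :
    Integrable (fun q : ℝ × ℝ => (ind q.2 * φ q.2) * (ind (q.1 - q.2) * ψ (q.1 - q.2))) := by
  refine my_dom (base2 φ ψ) ?_ ?_
  · refine Measurable.aestronglyMeasurable ?_
    exact ((measurable_ind.comp measurable_snd).mul
        (φ.continuous.measurable.comp measurable_snd)).mul
      ((measurable_ind.comp (measurable_fst.sub measurable_snd)).mul
        (ψ.continuous.measurable.comp (measurable_fst.sub measurable_snd)))
  · intro p
    simp only [norm_mul]
    calc ‖ind p.2‖ * ‖φ p.2‖ * (‖ind (p.1 - p.2)‖ * ‖ψ (p.1 - p.2)‖)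
        ≤ 1 * ‖φ p.2‖ * (1 * ‖ψ (p.1 - p.2)‖) := by
          refine mul_le_mul ?_ ?_ (by positivity) (by positivity)
          · exact mul_le_mul_of_nonneg_right (norm_ind_le _) (norm_nonneg _)
          · exact mul_le_mul_of_nonneg_right (norm_ind_le _) (norm_nonneg _)
      _ = ‖φ p.2‖ * ‖ψ (p.1 - p.2)‖ := by ring

lemma Hconv_integrable (φ ψ : SchwartzMap ℝ ℂ) : Integrable (Hconv φ ψ) := by
  have h := hconv_big_integrable φ ψ
  rw [MeasureTheory.Measure.volume_eq_prod] at h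
  exact h.integral_prod_left

lemma Hconv_continuous (φ ψ : SchwartzMap ℝ ℂ) : Continuous (Hconv φ ψ) := by
  obtain ⟨C, hC0, hC⟩ := ψ.decay 0 0
  have hCψ : ∀ t, ‖ψ t‖ ≤ C := by
    intro t
    have := hC t
    simpa [norm_iteratedFDeriv_zero] using this
  rw [continuous_iff_continuousAt]
  intro u₀
  rw [ContinuousAt]
  have hae : ∀ᵐ (v : ℝ), v ≠ u₀ := by
    rw [MeasureTheory.ae_iff]
    have hs : {v : ℝ | ¬ v ≠ u₀} = {u₀} := by
      ext v
      simp [not_not]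
    rw [hs]
    exact MeasureTheory.measure_singleton u₀
  refine MeasureTheory.tendsto_integral_filter_of_dominated_convergence
    (bound := fun v => ‖φ v‖ * C) ?_ ?_ ?_ ?_
  · refine Filter.Eventually.of_forall fun u => Measurable.aestronglyMeasurable ?_
    exact ((measurable_ind.mul φ.continuous.measurable)).mul
      ((measurable_ind.comp (measurable_const.sub measurable_id)).mul
        (ψ.continuous.measurable.comp (measurable_const.sub measurable_id)))
  · refine Filter.Eventually.of_forall fun u => Filter.Eventually.of_forall fun v => ?_
    simp only [norm_mul]
    calc ‖ind v‖ * ‖φ v‖ * (‖ind (u - v)‖ * ‖ψ (u - v)‖)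
        ≤ 1 * ‖φ v‖ * (1 * C) := by
          refine mul_le_mul ?_ ?_ (by positivity) (by positivity)
          · exact mul_le_mul_of_nonneg_right (norm_ind_le _) (norm_nonneg _)
          · exact mul_le_mul (norm_ind_le _) (hCψ _) (norm_nonneg _) zero_le_one
      _ = ‖φ v‖ * C := by ring
  · exact (φ.integrable.norm).mul_const C
  · filter_upwards [hae] with v hv
    have hcont : ContinuousAt (fun u => (ind v * φ v) * (ind (u - v) * ψ (u - v))) u₀ := by
      refine ContinuousAt.mul continuousAt_const (ContinuousAt.mul ?_ ?_)
      · have hsub : ContinuousAt (fun u : ℝ => u - v) u₀ :=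
          (continuous_id.sub continuous_const).continuousAt
        show ContinuousAt (ind ∘ fun u : ℝ => u - v) u₀
        refine ContinuousAt.comp ?_ hsub
        exact ind_continuousAt (sub_ne_zero.2 (Ne.symm hv))
      · exact (ψ.continuous.comp (continuous_id.sub continuous_const)).continuousAt
    exact hcont.tendsto

lemma Hconv_zero {u : ℝ} (hu : ¬ 0 < u) : Hconv φ ψ u = 0 := by
  rw [Hconv]
  have hz : ∀ v, (ind v * φ v) * (ind (u - v) * ψ (u - v)) = 0 := by
    intro v
    by_cases hv : 0 < v
    · have : ¬ 0 < u - v := by push_neg at hu ⊢; linarith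
      rw [ind_nonpos this]
      ring
    · rw [ind_nonpos hv]
      ring
  rw [MeasureTheory.integral_congr_ae (Filter.Eventually.of_forall hz),
    MeasureTheory.integral_zero]

lemma h_eq_inv (hφ : ⇑φ = 𝓕 ⇑f) (hψ : ⇑ψ = 𝓕 ⇑g) (x : ℝ) :
    CP ⇑f x * CP ⇑g x = ∫ u, ce x u * Hconv φ ψ u := by
  rw [CPf_eq hφ x, CPf_eq hψ x, ← MeasureTheory.integral_mul_const]
  simp_rw [← MeasureTheory.integral_const_mul]
  have trans : ∀ v, (∫ w, (ind v * (ce x v * φ v)) * (ind w * (ce x w * ψ w)))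
      = ∫ u, (ind v * φ v) * (ind (u - v) * ψ (u - v)) * ce x u := by
    intro v
    rw [← MeasureTheory.integral_add_right_eq_self
      (fun u => (ind v * φ v) * (ind (u - v) * ψ (u - v)) * ce x u) v]
    refine MeasureTheory.integral_congr_ae (Filter.Eventually.of_forall fun w => ?_)
    simp only []
    rw [add_sub_cancel_right, ce_add]
    ring
  simp_rw [trans]
  rw [my_swap (F := fun v u => (ind v * φ v) * (ind (u - v) * ψ (u - v)) * ce x u) (by
    refine my_dom (base2s φ ψ) ?_ ?_
    · refine Measurable.aestronglyMeasurable ?_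
      exact (((measurable_ind.comp measurable_fst).mul
          (φ.continuous.measurable.comp measurable_fst)).mul
        ((measurable_ind.comp (measurable_snd.sub measurable_fst)).mul
          (ψ.continuous.measurable.comp (measurable_snd.sub measurable_fst)))).mul
        (measurable_ce_comp x measurable_snd)
    · intro p
      simp only [norm_mul, norm_ce, mul_one]
      calc ‖ind p.1‖ * ‖φ p.1‖ * (‖ind (p.2 - p.1)‖ * ‖ψ (p.2 - p.1)‖)
          ≤ 1 * ‖φ p.1‖ * (1 * ‖ψ (p.2 - p.1)‖) := by
            refine mul_le_mul ?_ ?_ (by positivity) (by positivity)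
            · exact mul_le_mul_of_nonneg_right (norm_ind_le _) (norm_nonneg _)
            · exact mul_le_mul_of_nonneg_right (norm_ind_le _) (norm_nonneg _)
        _ = ‖φ p.1‖ * ‖ψ (p.2 - p.1)‖ := by ring)]
  simp_rw [MeasureTheory.integral_mul_const]
  refine MeasureTheory.integral_congr_ae (Filter.Eventually.of_forall fun u => ?_)
  simp only [Hconv]
  ring

lemma FI_Hconv (hφ : ⇑φ = 𝓕 ⇑f) (hψ : ⇑ψ = 𝓕 ⇑g) (u : ℝ) :
    𝓕 (Hconv φ ψ) u = CP ⇑f (-u) * CP ⇑g (-u) := by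
  rw [FI_eq]
  simp_rw [Hconv, ← MeasureTheory.integral_const_mul]
  rw [my_swap (F := fun w v => ce (-u) w * ((ind v * φ v) * (ind (w - v) * ψ (w - v)))) (by
    refine my_dom (base2 φ ψ) ?_ ?_
    · refine Measurable.aestronglyMeasurable ?_
      exact (measurable_ce_comp (-u) measurable_fst).mul
        (((measurable_ind.comp measurable_snd).mul
            (φ.continuous.measurable.comp measurable_snd)).mul
          ((measurable_ind.comp (measurable_fst.sub measurable_snd)).mul
            (ψ.continuous.measurable.comp (measurable_fst.sub measurable_snd))))
    · intro p
      simp only [norm_mul, norm_ce, one_mul]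
      calc ‖ind p.2‖ * ‖φ p.2‖ * (‖ind (p.1 - p.2)‖ * ‖ψ (p.1 - p.2)‖)
          ≤ 1 * ‖φ p.2‖ * (1 * ‖ψ (p.1 - p.2)‖) := by
            refine mul_le_mul ?_ ?_ (by positivity) (by positivity)
            · exact mul_le_mul_of_nonneg_right (norm_ind_le _) (norm_nonneg _)
            · exact mul_le_mul_of_nonneg_right (norm_ind_le _) (norm_nonneg _)
        _ = ‖φ p.2‖ * ‖ψ (p.1 - p.2)‖ := by ring)]
  have trans : ∀ v, (∫ w, ce (-u) w * ((ind v * φ v) * (ind (w - v) * ψ (w - v))))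
      = ∫ t, (ind v * (ce (-u) v * φ v)) * (ind t * (ce (-u) t * ψ t)) := by
    intro v
    rw [← MeasureTheory.integral_add_right_eq_self
      (fun w => ce (-u) w * ((ind v * φ v) * (ind (w - v) * ψ (w - v)))) v]
    refine MeasureTheory.integral_congr_ae (Filter.Eventually.of_forall fun t => ?_)
    simp only []
    rw [add_sub_cancel_right, ce_add]
    ring
  simp_rw [trans, MeasureTheory.integral_const_mul, MeasureTheory.integral_mul_const]
  rw [CPf_eq hφ (-u), CPf_eq hψ (-u), ← MeasureTheory.integral_mul_const]

lemma FhH (hφ : ⇑φ = 𝓕 ⇑f) (hψ : ⇑ψ = 𝓕 ⇑g) (ξ : ℝ) :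
    𝓕 (fun x => CP ⇑f x * CP ⇑g x) ξ = Hconv φ ψ ξ := by
  have hFH : 𝓕 (Hconv φ ψ) = fun u => CP ⇑f (-u) * CP ⇑g (-u) := funext (FI_Hconv hφ hψ)
  have hFHint : Integrable (𝓕 (Hconv φ ψ)) := by
    rw [hFH]
    exact (h_int hφ hψ).comp_neg
  have hinv : 𝓕⁻ (𝓕 (Hconv φ ψ)) = Hconv φ ψ :=
    (Hconv_continuous φ ψ).fourierInv_fourier_eq (Hconv_integrable φ ψ) hFHint
  rw [FI_eq]
  have hrep : ∀ y, CP ⇑f y * CP ⇑g y = 𝓕 (Hconv φ ψ) (-y) := by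
    intro y
    rw [hFH]
    simp [neg_neg]
  simp_rw [hrep]
  have hneg := MeasureTheory.integral_neg_eq_self
    (fun t => ce (-ξ) (-t) * 𝓕 (Hconv φ ψ) t) volume
  simp only [neg_neg] at hneg
  rw [hneg]
  simp_rw [ce_neg_neg]
  rw [← FIinv_eq, hinv]

lemma claim2 (hφ : ⇑φ = 𝓕 ⇑f) (hψ : ⇑ψ = 𝓕 ⇑g) (x : ℝ) :
    CP (fun y => CP ⇑f y * CP ⇑g y) x = CP ⇑f x * CP ⇑g x := by
  rw [CP_eq]
  simp_rw [FhH hφ hψ]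
  rw [MeasureTheory.setIntegral_eq_integral_of_forall_compl_eq_zero (fun u hu => by
    rw [Hconv_zero (by simpa using hu)]
    ring)]
  exact (h_eq_inv hφ hψ x).symm

end Claim2b

end CPaux

/-- For Schwartz functions `f`, `g` one has, as an identity in `L²(ℝ)` (i.e. a.e.),
`C₊(fg) + (C₊f)(C₊g) - C₊(f · C₊g) - C₊(g · C₊f) = 0`, and consequently
`C₊((C₊f)(C₊g)) = (C₊f)(C₊g)`. -/
theorem cauchy_projection_identity (f g : SchwartzMap ℝ ℂ) :
    (fun x => CP (fun y => f y * g y) x + CP (⇑f) x * CP (⇑g) x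
        - CP (fun y => f y * CP (⇑g) y) x - CP (fun y => g y * CP (⇑f) y) x)
      =ᵐ[volume] (0 : ℝ → ℂ) ∧
    CP (fun y => CP (⇑f) y * CP (⇑g) y) =ᵐ[volume] (fun y => CP (⇑f) y * CP (⇑g) y) := by
  have hφ : ⇑(SchwartzMap.fourierTransformCLM ℝ f) = 𝓕 ⇑f :=
    rfl
  have hψ : ⇑(SchwartzMap.fourierTransformCLM ℝ g) = 𝓕 ⇑g :=
    rfl
  refine ⟨Filter.Eventually.of_forall fun x => CPaux.claim1 hφ hψ x,
    Filter.Eventually.of_forall fun x => CPaux.claim2 hφ hψ x⟩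

end
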